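/- Let k ≥ 1, m ≥ 1 and n ≥ 1 be integers and let C be a linear code of length n over R_{k,m}. Then for all real numbers x and y, |C| · Σ_{b ∈ C^⊥} x^{n - w_H(b)} y^{w_H(b)} = Σ_{c ∈ C} (x + (2^{km} - 1)·y)^{n - w_H(c)} · (x - y)^{w_H(c)}, where w_H(a) denotes the number of nonzero coordinates of a vector a ∈ R_{k,m}^n (MacWilliams identity for Hamming weight enumerators over R_{k,m}). -/

import Mathlib

open MvPolynomial

set_option synthInstance.maxHeartbeats 1000000
set_option maxHeartbeats 1000000

/-- The ring `R_{k,m} = F_2[u,v]/⟨u^k, v^m⟩`. -/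
noncomputable abbrev Rkm (k m : ℕ) : Type :=
  MvPolynomial (Fin 2) (ZMod 2) ⧸
    (Ideal.span {(X 0 : MvPolynomial (Fin 2) (ZMod 2)) ^ k, (X 1 : MvPolynomial (Fin 2) (ZMod 2)) ^ m})

/-- The Hamming weight of a vector over `R_{k,m}`: the number of nonzero coordinates. -/
noncomputable def hWt {k m n : ℕ} (a : Fin n → Rkm k m) : ℕ :=
  Nat.card {i : Fin n // a i ≠ 0}

namespace RkmMW

abbrev P : Type := MvPolynomial (Fin 2) (ZMod 2)

/-- the exponent finsupp (i, j) -/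
noncomputable def μ (i j : ℕ) : Fin 2 →₀ ℕ := Finsupp.single 0 i + Finsupp.single 1 j

@[simp] lemma μ_apply_zero (i j : ℕ) : μ i j 0 = i := by
  simp [μ, Finsupp.single_apply]

@[simp] lemma μ_apply_one (i j : ℕ) : μ i j 1 = j := by
  simp [μ, Finsupp.single_apply]

lemma μ_add (i j i' j' : ℕ) : μ i j + μ i' j' = μ (i + i') (j + j') := by
  ext a
  fin_cases a <;> simp

noncomputable def I (k m : ℕ) : Ideal P := Ideal.span {(X 0 : P) ^ k, (X 1 : P) ^ m}

lemma coeff_eq_zero_of_mem_I {k m : ℕ} {p : P} (hp : p ∈ I k m) {i j : ℕ}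
    (hi : i < k) (hj : j < m) : MvPolynomial.coeff (μ i j) p = 0 := by
  rw [I, Ideal.mem_span_pair] at hp
  obtain ⟨f, g, rfl⟩ := hp
  rw [MvPolynomial.coeff_add, mul_comm f, mul_comm g, X_pow_eq_monomial, X_pow_eq_monomial,
    MvPolynomial.coeff_monomial_mul', MvPolynomial.coeff_monomial_mul']
  rw [if_neg, if_neg, add_zero]
  · intro h
    have := h 1
    simp [Finsupp.single_apply] at this
    omega
  · intro h
    have := h 0
    simp [Finsupp.single_apply] at this
    omega


/-- the canonical algebra quotient map -/
noncomputable def mk (k m : ℕ) : P →ₐ[ZMod 2] Rkm k m := Ideal.Quotient.mkₐ (ZMod 2) (I k m)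

/-- image of the monomial u^i v^j in the quotient -/
noncomputable def e (k m i j : ℕ) : Rkm k m := mk k m (monomial (μ i j) 1)

lemma mk_apply (k m : ℕ) (p : P) : mk k m p = Ideal.Quotient.mk (I k m) p := rfl

lemma mk_surjective (k m : ℕ) : Function.Surjective (mk k m) :=
  Ideal.Quotient.mkₐ_surjective _ _

lemma e_mul (k m i j i' j' : ℕ) : e k m i j * e k m i' j' = e k m (i + i') (j + j') := by
  rw [e, e, e, ← map_mul, monomial_mul, μ_add, one_mul]

lemma e_eq_zero {k m i j : ℕ} (h : k ≤ i ∨ m ≤ j) : e k m i j = 0 := by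
  rw [e, mk_apply]
  refine Ideal.Quotient.eq_zero_iff_mem.mpr ?_
  rcases h with h | h
  · have hμ : μ (i - k) j + Finsupp.single 0 k = μ i j := by
      ext a
      fin_cases a <;> simp [μ, Finsupp.single_apply] <;> omega
    have h1 : monomial (μ i j) (1 : ZMod 2) = monomial (μ (i - k) j) 1 * (X 0 : P) ^ k := by
      rw [X_pow_eq_monomial, monomial_mul, one_mul, hμ]
    rw [h1]
    exact Ideal.mul_mem_left _ _ (Ideal.subset_span (by simp))
  · have hμ : μ i (j - m) + Finsupp.single 1 m = μ i j := by
      ext a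
      fin_cases a <;> simp [μ, Finsupp.single_apply] <;> omega
    have h1 : monomial (μ i j) (1 : ZMod 2) = monomial (μ i (j - m)) 1 * (X 1 : P) ^ m := by
      rw [X_pow_eq_monomial, monomial_mul, one_mul, hμ]
    rw [h1]
    exact Ideal.mul_mem_left _ _ (Ideal.subset_span (by simp))

lemma mk_monomial_eq_zero {k m : ℕ} {d : Fin 2 →₀ ℕ} (h : k ≤ d 0 ∨ m ≤ d 1) :
    mk k m (monomial d 1) = 0 := by
  have hd : d = μ (d 0) (d 1) := by
    ext a
    fin_cases a <;> simp
  rw [hd]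
  exact e_eq_zero (by simpa using h)

lemma li (k m : ℕ) :
    LinearIndependent (ZMod 2) (fun p : Fin k × Fin m => e k m p.1 p.2) := by
  rw [Fintype.linearIndependent_iff]
  intro g hg p
  have h1 : mk k m (∑ q : Fin k × Fin m, monomial (μ q.1 q.2) (g q)) = 0 := by
    rw [map_sum, ← hg]
    refine Finset.sum_congr rfl fun q _ => ?_
    rw [e, ← map_smul, MvPolynomial.smul_monomial, smul_eq_mul, mul_one]
  rw [mk_apply] at h1
  replace h1 := Ideal.Quotient.eq_zero_iff_mem.mp h1
  have h2 := coeff_eq_zero_of_mem_I h1 p.1.isLt p.2.isLt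
  rw [MvPolynomial.coeff_sum] at h2
  rw [Finset.sum_eq_single p] at h2
  · rwa [MvPolynomial.coeff_monomial, if_pos rfl] at h2
  · intro q _ hq
    rw [MvPolynomial.coeff_monomial, if_neg]
    intro hc
    apply hq
    have h0 := congrArg (fun f => f 0) hc
    have h1' := congrArg (fun f => f 1) hc
    simp at h0 h1'
    ext
    · exact h0
    · exact h1'
  · intro h
    exact absurd (Finset.mem_univ p) h

lemma sp (k m : ℕ) :
    ⊤ ≤ Submodule.span (ZMod 2) (Set.range fun p : Fin k × Fin m => e k m p.1 p.2) := by
  intro r _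
  obtain ⟨p, rfl⟩ := mk_surjective k m r
  rw [MvPolynomial.as_sum p, map_sum]
  refine Submodule.sum_mem _ fun d _ => ?_
  have h1 : (monomial d) (coeff d p) = coeff d p • (monomial d (1 : ZMod 2)) := by
    rw [MvPolynomial.smul_monomial, smul_eq_mul, mul_one]
  rw [h1, map_smul]
  refine Submodule.smul_mem _ _ ?_
  by_cases hd : d 0 < k ∧ d 1 < m
  · apply Submodule.subset_span
    have hμ : μ (d 0) (d 1) = d := by
      ext a
      fin_cases a <;> simp
    refine ⟨(⟨d 0, hd.1⟩, ⟨d 1, hd.2⟩), ?_⟩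
    show e k m (d 0) (d 1) = _
    rw [e, hμ]
  · rw [mk_monomial_eq_zero (by omega)]
    exact Submodule.zero_mem _

/-- basis of `R_{k,m}` over `F_2` by monomials `u^i v^j`, `i<k`, `j<m`. -/
noncomputable def bas (k m : ℕ) : Module.Basis (Fin k × Fin m) (ZMod 2) (Rkm k m) :=
  Module.Basis.mk (li k m) (sp k m)

lemma bas_apply (k m : ℕ) (p : Fin k × Fin m) : bas k m p = e k m p.1 p.2 :=
  Module.Basis.mk_apply _ _ _


lemma zmod2_eq_one : ∀ {c : ZMod 2}, c ≠ 0 → c = 1 := by decide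

/-- every nonzero element of `R_{k,m}` divides the socle generator `u^{k-1} v^{m-1}` -/
lemma exists_mul_eq_socle {k m : ℕ} (hk : 1 ≤ k) (hm : 1 ≤ m) {a : Rkm k m} (ha : a ≠ 0) :
    ∃ t : Rkm k m, t * a = e k m (k - 1) (m - 1) := by
  classical
  set B := bas k m with hB
  set g := B.repr a with hg
  have hgne : g ≠ 0 := by
    intro h
    rw [hg] at h
    exact ha (B.repr.map_eq_zero_iff.mp h)
  obtain ⟨p₀, hp₀⟩ : ∃ p, g p ≠ 0 := by
    by_contra hc
    push_neg at hc
    exact hgne (Finsupp.ext hc)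
  set s₁ : Finset (Fin k) := Finset.univ.filter (fun i => ∃ j, g (i, j) ≠ 0) with hs₁
  have hs₁ne : s₁.Nonempty := ⟨p₀.1, by simp [hs₁]; exact ⟨p₀.2, hp₀⟩⟩
  set i0 : Fin k := s₁.min' hs₁ne with hi0
  have hi0mem : i0 ∈ s₁ := s₁.min'_mem hs₁ne
  obtain ⟨j₁, hj₁⟩ : ∃ j, g (i0, j) ≠ 0 := by
    simpa [hs₁] using hi0mem
  set s₂ : Finset (Fin m) := Finset.univ.filter (fun j => g (i0, j) ≠ 0) with hs₂
  have hs₂ne : s₂.Nonempty := ⟨j₁, by simp [hs₂, hj₁]⟩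
  set j0 : Fin m := s₂.min' hs₂ne with hj0
  have hj0mem : j0 ∈ s₂ := s₂.min'_mem hs₂ne
  have hgj : g (i0, j0) ≠ 0 := by simpa [hs₂] using hj0mem
  have hlowi : ∀ (i : Fin k) (j : Fin m), (i : ℕ) < (i0 : ℕ) → g (i, j) = 0 := by
    intro i j hij
    by_contra hc
    have : i ∈ s₁ := by simp [hs₁]; exact ⟨j, hc⟩
    have := s₁.min'_le i this
    rw [← hi0] at this
    exact absurd (lt_of_le_of_lt this (by exact_mod_cast hij)) (lt_irrefl _)
  have hlowj : ∀ (j : Fin m), (j : ℕ) < (j0 : ℕ) → g (i0, j) = 0 := by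
    intro j hij
    by_contra hc
    have : j ∈ s₂ := by simp [hs₂, hc]
    have := s₂.min'_le j this
    rw [← hj0] at this
    exact absurd (lt_of_le_of_lt this (by exact_mod_cast hij)) (lt_irrefl _)
  refine ⟨e k m (k - 1 - (i0 : ℕ)) (m - 1 - (j0 : ℕ)), ?_⟩
  have hrep : a = ∑ p : Fin k × Fin m, g p • e k m p.1 p.2 := by
    conv_lhs => rw [← B.sum_repr a]
    refine Finset.sum_congr rfl fun p _ => ?_
    rw [← hg, hB, bas_apply]
  rw [hrep, Finset.mul_sum]
  have hi0k : (i0 : ℕ) < k := i0.isLt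
  have hj0m : (j0 : ℕ) < m := j0.isLt
  rw [Finset.sum_eq_single (i0, j0)]
  · dsimp only
    rw [mul_smul_comm, e_mul, zmod2_eq_one hgj, one_smul]
    congr 1 <;> omega
  · rintro ⟨i, j⟩ _ hne
    dsimp only
    rcases lt_trichotomy (i : ℕ) (i0 : ℕ) with hlt | heq | hgt
    · rw [hlowi i j hlt, zero_smul, mul_zero]
    · have hieq : i = i0 := Fin.ext heq
      subst hieq
      rcases lt_trichotomy (j : ℕ) (j0 : ℕ) with hlt' | heq' | hgt'
      · rw [hlowj j hlt', zero_smul, mul_zero]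
      · exact absurd (by rw [Fin.ext heq']) hne
      · rw [mul_smul_comm, e_mul, e_eq_zero (Or.inr (by omega)), smul_zero]
    · rw [mul_smul_comm, e_mul, e_eq_zero (Or.inl (by omega)), smul_zero]
  · intro h
    exact absurd (Finset.mem_univ _) h


/-- the generating character of `R_{k,m}`: `(-1)^(coefficient of u^{k-1} v^{m-1})`. -/
noncomputable def χ (k m : ℕ) (hk : 1 ≤ k) (hm : 1 ≤ m) (r : Rkm k m) : ℝ :=
  if (bas k m).repr r (⟨k - 1, by omega⟩, ⟨m - 1, by omega⟩) = 0 then 1 else -1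

variable {k m : ℕ} (hk : 1 ≤ k) (hm : 1 ≤ m)

lemma χ_zero : χ k m hk hm 0 = 1 := by
  simp [χ]

lemma ite_sign_add (c d : ZMod 2) :
    (if c + d = 0 then (1 : ℝ) else -1) = (if c = 0 then 1 else -1) * (if d = 0 then 1 else -1) := by
  have hcd : ∀ c : ZMod 2, c = 0 ∨ c = 1 := by decide
  rcases hcd c with hc | hc <;> rcases hcd d with hd | hd <;> subst hc <;> subst hd
  · simp
  · rw [if_neg (by decide : ¬((0 : ZMod 2) + 1 = 0)), if_pos rfl,
      if_neg (by decide : ¬((1 : ZMod 2) = 0))]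
    norm_num
  · rw [if_neg (by decide : ¬((1 : ZMod 2) + 0 = 0)), if_pos rfl,
      if_neg (by decide : ¬((1 : ZMod 2) = 0))]
    norm_num
  · rw [if_pos (by decide : ((1 : ZMod 2) + 1 = 0)), if_neg (by decide : ¬((1 : ZMod 2) = 0))]
    norm_num

lemma χ_add (a b : Rkm k m) : χ k m hk hm (a + b) = χ k m hk hm a * χ k m hk hm b := by
  rw [χ, χ, χ, map_add, Finsupp.add_apply, ite_sign_add]

lemma χ_socle : χ k m hk hm (e k m (k - 1) (m - 1)) = -1 := by
  have h : e k m (k - 1) (m - 1) = bas k m (⟨k - 1, by omega⟩, ⟨m - 1, by omega⟩) := by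
    rw [bas_apply]
  rw [χ, h, (bas k m).repr_self]
  simp

lemma χ_sum {ι : Type*} (s : Finset ι) (f : ι → Rkm k m) :
    χ k m hk hm (∑ i ∈ s, f i) = ∏ i ∈ s, χ k m hk hm (f i) := by
  classical
  induction s using Finset.induction_on with
  | empty => simpa using χ_zero hk hm
  | insert _ _ hx ih =>
    rw [Finset.sum_insert hx, Finset.prod_insert hx, χ_add, ih]

/-- a multiplicative real-valued function with a value `≠ 1` sums to zero over a
finite additive group -/
lemma sum_eq_zero_of_exists {G : Type*} [AddCommGroup G] [Fintype G] (F : G → ℝ)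
    (hF : ∀ a b, F (a + b) = F a * F b) (g : G) (hg : F g ≠ 1) :
    ∑ r : G, F r = 0 := by
  have h : F g * ∑ r : G, F r = ∑ r : G, F r := by
    rw [Finset.mul_sum]
    calc ∑ r : G, F g * F r = ∑ r : G, F (g + r) :=
          Finset.sum_congr rfl fun r _ => (hF g r).symm
      _ = ∑ r : G, F r := Fintype.sum_equiv (Equiv.addLeft g) _ _ (fun r => rfl)
  have h2 : (F g - 1) * ∑ r : G, F r = 0 := by
    rw [sub_mul, one_mul, h, sub_self]
  rcases mul_eq_zero.mp h2 with h3 | h3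
  · exact absurd (by linarith : F g = 1) hg
  · exact h3


noncomputable instance (k m : ℕ) : Fintype (Rkm k m) := Module.fintypeOfFintype (bas k m)

noncomputable instance (k m : ℕ) : DecidableEq (Rkm k m) := Classical.decEq _

lemma card_Rkm (k m : ℕ) : Fintype.card (Rkm k m) = 2 ^ (k * m) := by
  rw [Module.card_fintype (bas k m)]
  simp [ZMod.card]

lemma sum_char_mul {a : Rkm k m} (ha : a ≠ 0) :
    ∑ r : Rkm k m, χ k m hk hm (a * r) = 0 := by
  obtain ⟨t, ht⟩ := exists_mul_eq_socle hk hm ha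
  refine sum_eq_zero_of_exists _ (fun r r' => by rw [mul_add, χ_add]) t ?_
  rw [mul_comm, ht, χ_socle]
  norm_num

lemma coord_sum (x y : ℝ) (r0 : Rkm k m) :
    ∑ r : Rkm k m, χ k m hk hm (r0 * r) * (if r = 0 then x else y) =
      if r0 = 0 then x + ((Fintype.card (Rkm k m) : ℝ) - 1) * y else x - y := by
  classical
  by_cases h : r0 = 0
  · subst h
    rw [if_pos rfl]
    have h1 : ∀ r : Rkm k m, χ k m hk hm (0 * r) * (if r = 0 then x else y)
        = (if r = 0 then x else y) := by
      intro r
      rw [zero_mul, χ_zero, one_mul]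
    rw [Finset.sum_congr rfl fun r _ => h1 r, Finset.sum_ite, Finset.sum_const,
      Finset.sum_const, Finset.filter_eq' Finset.univ 0, if_pos (Finset.mem_univ 0)]
    have h2 : (Finset.univ.filter (fun r : Rkm k m => ¬ r = 0)) = Finset.univ.erase 0 := by
      ext r
      simp [Finset.mem_erase, and_comm]
    rw [h2, Finset.card_erase_of_mem (Finset.mem_univ 0), Finset.card_singleton,
      Finset.card_univ]
    have h3 : 1 ≤ Fintype.card (Rkm k m) := Fintype.card_pos
    rw [one_smul, nsmul_eq_mul, Nat.cast_sub h3]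
    push_cast
    ring
  · rw [if_neg h]
    have hsum := sum_char_mul hk hm h
    have h0 : χ k m hk hm (r0 * 0) = 1 := by rw [mul_zero, χ_zero]
    have herase2 : ∑ r ∈ Finset.univ.erase 0, χ k m hk hm (r0 * r) + χ k m hk hm (r0 * 0)
        = 0 := by
      rw [Finset.sum_erase_add Finset.univ (fun r => χ k m hk hm (r0 * r)) (Finset.mem_univ 0)]
      exact hsum
    rw [h0] at herase2
    have herase3 : ∑ r ∈ Finset.univ.erase 0, χ k m hk hm (r0 * r) = -1 := by linarith
    calc ∑ r : Rkm k m, χ k m hk hm (r0 * r) * (if r = 0 then x else y)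
        = ∑ r ∈ Finset.univ.erase 0, χ k m hk hm (r0 * r) * (if r = 0 then x else y)
            + χ k m hk hm (r0 * 0) * (if (0 : Rkm k m) = 0 then x else y) :=
          (Finset.sum_erase_add Finset.univ _ (Finset.mem_univ 0)).symm
      _ = (∑ r ∈ Finset.univ.erase 0, χ k m hk hm (r0 * r)) * y + x := by
          rw [Finset.sum_mul, h0, if_pos rfl, one_mul]
          congr 1
          refine Finset.sum_congr rfl fun r hr => ?_
          rw [if_neg (Finset.mem_erase.mp hr).1]
      _ = x - y := by rw [herase3]; ring

lemma row_sum (n : ℕ) (x y : ℝ) (a : Fin n → Rkm k m) :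
    ∑ b : Fin n → Rkm k m,
        χ k m hk hm (∑ i, a i * b i) * ∏ i, (if b i = 0 then x else y) =
      ∏ i, (if a i = 0 then x + ((Fintype.card (Rkm k m) : ℝ) - 1) * y else x - y) := by
  classical
  have h1 : ∀ i : Fin n, (if a i = 0 then x + ((Fintype.card (Rkm k m) : ℝ) - 1) * y else x - y)
      = ∑ r : Rkm k m, χ k m hk hm (a i * r) * (if r = 0 then x else y) :=
    fun i => (coord_sum hk hm x y (a i)).symm
  rw [Finset.prod_congr rfl fun i _ => h1 i, Finset.prod_univ_sum]
  rw [Fintype.piFinset_univ]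
  refine Finset.sum_congr rfl fun b _ => ?_
  rw [Finset.prod_mul_distrib, χ_sum]

end RkmMW

namespace RkmMW

lemma prod_ite_weight {k m n : ℕ} (u v : ℝ) (b : Fin n → Rkm k m) :
    ∏ i, (if b i = 0 then u else v) = u ^ (n - hWt b) * v ^ hWt b := by
  classical
  have hw : hWt b = (Finset.univ.filter (fun i => ¬ b i = 0)).card := by
    rw [hWt, Nat.card_eq_fintype_card]
    convert Fintype.card_subtype (p := fun i => ¬ b i = 0) using 2
  have hz : (Finset.univ.filter (fun i => b i = 0)).card = n - hWt b := by
    have := Finset.card_filter_add_card_filter_not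
      (s := (Finset.univ : Finset (Fin n))) (fun i => b i = 0)
    rw [Finset.card_univ, Fintype.card_fin] at this
    omega
  rw [Finset.prod_ite, Finset.prod_const, Finset.prod_const, hz, ← hw]

end RkmMW

open RkmMW

/-- MacWilliams identity for the Hamming weight enumerators of a linear code over `R_{k,m}`
and its dual:
`|C| · W_{C^⊥}(x,y) = W_C(x + (2^{km}-1)y, x - y)`. -/
theorem Rkm_macwilliams_hamming (k m n : ℕ) (hk : 1 ≤ k) (hm : 1 ≤ m) (hn : 1 ≤ n)
    (C : Submodule (Rkm k m) (Fin n → Rkm k m)) (x y : ℝ) :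
    (Nat.card C : ℝ) *
      ∑ᶠ b ∈ {b : Fin n → Rkm k m | ∀ a ∈ C, ∑ i, a i * b i = 0},
        x ^ (n - hWt b) * y ^ hWt b =
    ∑ᶠ c ∈ (C : Set (Fin n → Rkm k m)),
      (x + ((2 : ℝ) ^ (k * m) - 1) * y) ^ (n - hWt c) * (x - y) ^ hWt c := by
  classical
  set D : Set (Fin n → Rkm k m) := {b | ∀ a ∈ C, ∑ i, a i * b i = 0} with hD
  have hDfin : D.Finite := Set.toFinite _
  have hCfin : (C : Set (Fin n → Rkm k m)).Finite := Set.toFinite _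
  rw [finsum_mem_eq_finite_toFinset_sum _ hDfin, finsum_mem_eq_finite_toFinset_sum _ hCfin]
  -- replace 2 ^ (k*m) by the cardinality of the ring
  have hq : ((Fintype.card (Rkm k m) : ℝ)) = (2 : ℝ) ^ (k * m) := by
    rw [card_Rkm]; push_cast; ring
  rw [← hq]
  -- the cardinality of the code
  have hcard : (Nat.card C : ℝ) = (hCfin.toFinset.card : ℝ) := by
    norm_cast
    have h0 : Nat.card C = Nat.card (C : Set (Fin n → Rkm k m)) := rfl
    rw [h0, Nat.card_coe_set_eq, Set.ncard_eq_toFinset_card _ hCfin]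
  -- key 2 : character sums over the code detect the dual
  have key2 : ∀ b : Fin n → Rkm k m,
      ∑ c ∈ hCfin.toFinset, χ k m hk hm (∑ i, c i * b i)
        = if b ∈ D then (Nat.card C : ℝ) else 0 := by
    intro b
    by_cases hb : b ∈ D
    · rw [if_pos hb]
      rw [Finset.sum_congr rfl fun c hc => ?_, Finset.sum_const, hcard]
      · rw [nsmul_eq_mul, mul_one]
      · rw [hb c (hCfin.mem_toFinset.mp hc), χ_zero]
    · rw [if_neg hb]
      rw [Finset.sum_subtype hCfin.toFinset (fun c => hCfin.mem_toFinset) _]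
      rw [hD] at hb
      simp only [Set.mem_setOf_eq, not_forall] at hb
      obtain ⟨a0, ha0, hd⟩ := hb
      obtain ⟨t, ht⟩ := exists_mul_eq_socle hk hm hd
      refine sum_eq_zero_of_exists _ ?_ ⟨t • a0, C.smul_mem t ha0⟩ ?_
      · intro a a'
        have : ∑ i, ((a : Fin n → Rkm k m) i + (a' : Fin n → Rkm k m) i) * b i
            = ∑ i, (a : Fin n → Rkm k m) i * b i + ∑ i, (a' : Fin n → Rkm k m) i * b i := by
          rw [← Finset.sum_add_distrib]
          exact Finset.sum_congr rfl fun i _ => by ring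
        show χ k m hk hm (∑ i, ((a : Fin n → Rkm k m) i + (a' : Fin n → Rkm k m) i) * b i) = _
        rw [this, χ_add]
      · show χ k m hk hm (∑ i, (t • a0) i * b i) ≠ 1
        have : ∑ i, (t • a0) i * b i = t * ∑ i, a0 i * b i := by
          rw [Finset.mul_sum]
          exact Finset.sum_congr rfl fun i _ => by
            rw [Pi.smul_apply, smul_eq_mul, mul_assoc]
        rw [this, ht, χ_socle]
        norm_num
  -- main computation
  calc (Nat.card C : ℝ) * ∑ b ∈ hDfin.toFinset, x ^ (n - hWt b) * y ^ hWt b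
      = ∑ b ∈ hDfin.toFinset, (Nat.card C : ℝ) * ∏ i, (if b i = 0 then x else y) := by
        rw [Finset.mul_sum]
        exact Finset.sum_congr rfl fun b _ => by rw [prod_ite_weight]
    _ = ∑ b : Fin n → Rkm k m,
          (if b ∈ D then (Nat.card C : ℝ) else 0) * ∏ i, (if b i = 0 then x else y) := by
        simp only [ite_mul, zero_mul]
        rw [← Finset.sum_filter]
        refine Finset.sum_congr ?_ fun b _ => rfl
        ext b
        simp only [Finset.mem_filter, Finset.mem_univ, true_and, Set.Finite.mem_toFinset]
    _ = ∑ b : Fin n → Rkm k m, ∑ c ∈ hCfin.toFinset,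
          χ k m hk hm (∑ i, c i * b i) * ∏ i, (if b i = 0 then x else y) := by
        refine Finset.sum_congr rfl fun b _ => ?_
        rw [← key2 b, Finset.sum_mul]
    _ = ∑ c ∈ hCfin.toFinset, ∑ b : Fin n → Rkm k m,
          χ k m hk hm (∑ i, c i * b i) * ∏ i, (if b i = 0 then x else y) :=
        Finset.sum_comm
    _ = ∑ c ∈ hCfin.toFinset,
          ∏ i, (if c i = 0 then x + ((Fintype.card (Rkm k m) : ℝ) - 1) * y else x - y) :=
        Finset.sum_congr rfl fun c _ => row_sum hk hm n x y c
    _ = ∑ c ∈ hCfin.toFinset,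
          (x + ((Fintype.card (Rkm k m) : ℝ) - 1) * y) ^ (n - hWt c) * (x - y) ^ hWt c :=
        Finset.sum_congr rfl fun c _ => prod_ite_weight _ _ c
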